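/- Let p be a prime and let S = F_p[X]/(X^{p+1}). Let G be the kernel of the group homomorphism S^× → F_p^× induced on unit groups by the ring homomorphism S → F_p sending X to 0 (so G consists of the units of S congruent to 1 modulo the image of X). Then G is isomorphic, as an abstract group, to ℤ/p²ℤ × (ℤ/pℤ)^{p-2}. In particular, the unit 1 + X has multiplicative order exactly p². -/

import Mathlib

/-- The ring `S = F_p[X]/(X^{p+1})`. -/
abbrev truncPolyRing (p : ℕ) : Type :=
  Polynomial (ZMod p) ⧸ Ideal.span {(Polynomial.X : Polynomial (ZMod p)) ^ (p + 1)}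

/-- The ring homomorphism `S → F_p` sending `X` to `0`. -/
noncomputable def truncPolyEval (p : ℕ) : truncPolyRing p →+* ZMod p :=
  Ideal.Quotient.lift _ (Polynomial.evalRingHom 0) (by
    intro a ha
    rw [Ideal.mem_span_singleton] at ha
    obtain ⟨c, rfl⟩ := ha
    simp [pow_succ])

open Polynomial

section AuxGeneral

lemma one_add_sq_zero_pow {R : Type*} [CommRing R] {y : R} (h : y * y = 0) (n : ℕ) :
    (1 + y) ^ n = 1 + (n : R) * y := by
  induction n with
  | zero => simp
  | succ n ih =>
    rw [pow_succ, ih]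
    have : (1 + (n : R) * y) * (1 + y) = 1 + ((n : R) + 1) * y + (n : R) * (y * y) := by ring
    rw [this, h, mul_zero, add_zero]
    push_cast; ring

lemma pow_val_add {G : Type*} [Group G] {n : ℕ} [NeZero n] {g : G} (hg : g ^ n = 1)
    (c d : ZMod n) : g ^ (c + d).val = g ^ c.val * g ^ d.val := by
  rw [ZMod.val_add, ← pow_eq_pow_mod _ hg, pow_add]

lemma mk_X_pow_eq_zero {K : Type*} [CommRing K] {m k : ℕ} (h : m ≤ k) :
    Ideal.Quotient.mk (Ideal.span {(X : K[X]) ^ m}) (X ^ k) = 0 := by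
  rw [Ideal.Quotient.eq_zero_iff_mem, Ideal.mem_span_singleton]
  exact pow_dvd_pow _ h

lemma aux_coeff {K : Type*} [CommRing K] {m k : ℕ} (hk : k < m) (c : K)
    (h : Ideal.Quotient.mk (Ideal.span {(X : K[X]) ^ m}) (C c * X ^ k) = 0) : c = 0 := by
  rw [Ideal.Quotient.eq_zero_iff_mem, Ideal.mem_span_singleton] at h
  have := (Polynomial.X_pow_dvd_iff.mp h) k hk
  simpa [Polynomial.coeff_C_mul, Polynomial.coeff_X_pow] using this

end AuxGeneral

section AuxP

variable (p : ℕ) [Fact p.Prime]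

/-- the image of `X` in `truncPolyRing p`. -/
noncomputable def xg : truncPolyRing p :=
  Ideal.Quotient.mk (Ideal.span {(X : (ZMod p)[X]) ^ (p + 1)}) X

lemma xg_pow_eq_zero {k : ℕ} (h : p + 1 ≤ k) : (xg p) ^ k = 0 := by
  rw [xg, ← map_pow]
  exact mk_X_pow_eq_zero h

lemma xg_pow_ne_zero {k : ℕ} (h : k ≤ p) : (xg p) ^ k ≠ 0 := by
  intro hk
  rw [xg, ← map_pow, Ideal.Quotient.eq_zero_iff_mem, Ideal.mem_span_singleton] at hk
  have := (Polynomial.X_pow_dvd_iff.mp hk) k (by omega)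
  simp [Polynomial.coeff_X_pow] at this

lemma truncPolyEval_mk' (g : (ZMod p)[X]) :
    truncPolyEval p (Ideal.Quotient.mk _ g) = g.eval 0 :=
  Ideal.Quotient.lift_mk _ _ _

lemma truncPolyRing_charP : CharP (truncPolyRing p) p := by
  apply CharP.quotient'
  intro x hx
  rw [Ideal.mem_span_singleton] at hx
  have h0 := (Polynomial.X_pow_dvd_iff.mp hx) 0 (by omega)
  rw [← Polynomial.C_eq_natCast] at h0 ⊢
  simp [Polynomial.coeff_C] at h0
  simp [h0]

lemma one_add_xg_pow_p : (1 + xg p) ^ p = 1 + xg p ^ p := by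
  haveI := truncPolyRing_charP p
  rw [add_pow_char, one_pow]

lemma one_add_xg_pow_p_sq : (1 + xg p) ^ p ^ 2 = 1 := by
  haveI := truncPolyRing_charP p
  rw [add_pow_char_pow, one_pow, xg_pow_eq_zero p (by nlinarith [(Fact.out : p.Prime).two_le]),
    add_zero]

lemma one_add_xg_pow_k_pow_p {k : ℕ} (hk : 2 ≤ k) : (1 + xg p ^ k) ^ p = 1 := by
  haveI := truncPolyRing_charP p
  have h2 := (Fact.out : p.Prime).two_le
  rw [add_pow_char, one_pow, ← pow_mul, xg_pow_eq_zero p (by nlinarith), add_zero]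

lemma orderOf_one_add_xg : orderOf (1 + xg p) = p ^ 2 := by
  refine orderOf_eq_prime_pow (n := 1) ?_ ?_
  · rw [pow_one, one_add_xg_pow_p]
    intro h
    exact xg_pow_ne_zero p le_rfl (add_eq_left.mp h)
  · exact one_add_xg_pow_p_sq p

lemma prod_one_add_pow_eq_one (e : ℕ → ℕ) (he : ∀ j, e j < p)
    (hprod : ∏ j ∈ Finset.range (p - 1), (1 + xg p ^ (2 + j)) ^ e (2 + j) = 1) :
    ∀ j < p - 1, e (2 + j) = 0 := by
  intro j
  induction j using Nat.strong_induction_on with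
  | _ j ih =>
  intro hj
  have hle : Ideal.span {(X : (ZMod p)[X]) ^ (p + 1)} ≤
      Ideal.span {(X : (ZMod p)[X]) ^ (3 + j)} := by
    rw [Ideal.span_singleton_le_span_singleton]
    exact pow_dvd_pow _ (by omega)
  set q := Ideal.Quotient.factor hle with hq
  set t := Ideal.Quotient.mk (Ideal.span {(X : (ZMod p)[X]) ^ (3 + j)}) X with ht
  have hqx : q (xg p) = t := Ideal.Quotient.factor_mk hle X
  have happ := congrArg q hprod
  rw [map_one, map_prod] at happ
  simp only [map_pow, map_add, map_one, hqx] at happ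
  rw [Finset.prod_eq_single j ?_ ?_] at happ
  · have hsq : t ^ (2 + j) * t ^ (2 + j) = 0 := by
      rw [← pow_add, ht, ← map_pow]
      exact mk_X_pow_eq_zero (by omega)
    rw [one_add_sq_zero_pow hsq] at happ
    have h0 : ((e (2 + j) : ℕ) : (ZMod p)[X] ⧸ Ideal.span {(X : (ZMod p)[X]) ^ (3 + j)}) *
        t ^ (2 + j) = 0 := add_eq_left.mp happ
    have hmk : Ideal.Quotient.mk (Ideal.span {(X : (ZMod p)[X]) ^ (3 + j)})
        (C ((e (2 + j) : ZMod p)) * X ^ (2 + j)) = 0 := by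
      rw [map_mul, map_pow, Polynomial.C_eq_natCast, map_natCast]
      exact h0
    have hz := aux_coeff (by omega) _ hmk
    rw [ZMod.natCast_eq_zero_iff] at hz
    exact Nat.eq_zero_of_dvd_of_lt hz (he _)
  · intro b hb hbj
    rcases lt_or_gt_of_ne hbj with hlt | hgt
    · rw [ih b hlt (by omega), pow_zero]
    · rw [ht, ← map_pow, mk_X_pow_eq_zero (by omega), add_zero, one_pow]
  · intro h
    exact absurd (Finset.mem_range.mpr hj) h

lemma step1_dvd (N : ℕ) (b : Fin (p - 2) → ℕ)
    (h : (1 + xg p) ^ N * ∏ i : Fin (p - 2), (1 + xg p ^ (2 + (i : ℕ))) ^ b i = 1) :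
    p ∣ N := by
  have h2 := (Fact.out : p.Prime).two_le
  have hle : Ideal.span {(X : (ZMod p)[X]) ^ (p + 1)} ≤
      Ideal.span {(X : (ZMod p)[X]) ^ 2} := by
    rw [Ideal.span_singleton_le_span_singleton]
    exact pow_dvd_pow _ (by omega)
  set q := Ideal.Quotient.factor hle with hq
  set t := Ideal.Quotient.mk (Ideal.span {(X : (ZMod p)[X]) ^ 2}) X with ht
  have hqx : q (xg p) = t := Ideal.Quotient.factor_mk hle X
  have happ := congrArg q h
  rw [map_one, map_mul, map_prod] at happ
  simp only [map_pow, map_add, map_one, hqx] at happ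
  have hone : ∀ i ∈ Finset.univ, (1 + t ^ (2 + (i : Fin (p - 2)) : ℕ)) ^ b i = 1 := by
    intro i _
    rw [ht, ← map_pow, mk_X_pow_eq_zero (by omega), add_zero, one_pow]
  rw [Finset.prod_congr rfl hone, Finset.prod_const_one, mul_one] at happ
  have hsq : t * t = 0 := by
    rw [ht, ← map_mul, ← pow_two]
    exact mk_X_pow_eq_zero le_rfl
  rw [one_add_sq_zero_pow hsq] at happ
  have h0 : ((N : ℕ) : (ZMod p)[X] ⧸ Ideal.span {(X : (ZMod p)[X]) ^ 2}) * t = 0 :=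
    add_eq_left.mp happ
  have hmk : Ideal.Quotient.mk (Ideal.span {(X : (ZMod p)[X]) ^ 2})
      (C ((N : ZMod p)) * X ^ 1) = 0 := by
    rw [map_mul, map_pow, Polynomial.C_eq_natCast, map_natCast, pow_one]
    exact h0
  have hz := aux_coeff (by omega) _ hmk
  rwa [ZMod.natCast_eq_zero_iff] at hz

lemma card_truncPolyRing : Nat.card (truncPolyRing p) = p ^ (p + 1) := by
  have hmonic : ((X : (ZMod p)[X]) ^ (p + 1)).Monic := monic_X_pow _
  let pb := AdjoinRoot.powerBasis' hmonic
  have e : truncPolyRing p ≃ (Fin pb.dim → ZMod p) := pb.basis.equivFun.toEquiv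
  rw [Nat.card_congr e]
  have hdim : pb.dim = p + 1 := by
    show ((X : (ZMod p)[X]) ^ (p + 1)).natDegree = p + 1
    simp
  rw [hdim]
  simp [Nat.card_eq_fintype_card, ZMod.card]

lemma nilpotent_of_eval_zero (a : truncPolyRing p) (h : truncPolyEval p a = 0) :
    a ^ (p + 1) = 0 := by
  obtain ⟨g, rfl⟩ := Ideal.Quotient.mk_surjective a
  rw [truncPolyEval_mk'] at h
  have hdvd : X ∣ g := X_dvd_iff.mpr (by rwa [coeff_zero_eq_eval_zero])
  obtain ⟨g', rfl⟩ := hdvd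
  rw [← map_pow, Ideal.Quotient.eq_zero_iff_mem, Ideal.mem_span_singleton, mul_pow]
  exact Dvd.dvd.mul_right dvd_rfl _

lemma card_eval_zero_set :
    Nat.card {a : truncPolyRing p // truncPolyEval p a = 0} = p ^ p := by
  set f := (truncPolyEval p).toAddMonoidHom with hf
  have hsurj : Function.Surjective f := by
    intro c
    exact ⟨Ideal.Quotient.mk _ (C c), by simp [hf, RingHom.toAddMonoidHom, truncPolyEval_mk']⟩
  have h1 : Nat.card (truncPolyRing p) =
      Nat.card (truncPolyRing p ⧸ f.ker) * Nat.card f.ker :=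
    AddSubgroup.card_eq_card_quotient_mul_card_addSubgroup _
  have h2 : Nat.card (truncPolyRing p ⧸ f.ker) = p := by
    rw [Nat.card_congr (QuotientAddGroup.quotientKerEquivOfSurjective f hsurj).toEquiv]
    simp [Nat.card_eq_fintype_card, ZMod.card]
  have h3 : Nat.card {a : truncPolyRing p // truncPolyEval p a = 0} = Nat.card f.ker := by
    apply Nat.card_congr
    exact Equiv.subtypeEquivRight (fun a => by simp [hf, AddMonoidHom.mem_ker])
  rw [h3]
  rw [card_truncPolyRing, h2] at h1
  have hppos := (Fact.out : p.Prime).pos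
  rw [pow_succ, mul_comm (p ^ p) p] at h1
  exact (Nat.eq_of_mul_eq_mul_left hppos h1).symm

end AuxP

/-- the kernel `G` of `S^× → F_p^×`, for `S = F_p[X]/(X^{p+1})`, is
isomorphic to `ℤ/p²ℤ × (ℤ/pℤ)^{p-2}`; in particular `1 + X` has multiplicative order
exactly `p²`. -/
theorem units_ker_iso_and_orderOf (p : ℕ) (hp : p.Prime) :
    Nonempty ((MonoidHom.ker (Units.map (truncPolyEval p).toMonoidHom)) ≃*
        Multiplicative (ZMod (p ^ 2) × (Fin (p - 2) → ZMod p))) ∧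
    orderOf ((1 : truncPolyRing p) +
        Ideal.Quotient.mk (Ideal.span {(Polynomial.X : Polynomial (ZMod p)) ^ (p + 1)})
          Polynomial.X) = p ^ 2 := by
  haveI : Fact p.Prime := ⟨hp⟩
  haveI : NeZero p := ⟨hp.ne_zero⟩
  haveI : NeZero (p ^ 2) := ⟨pow_ne_zero _ hp.ne_zero⟩
  have h2p' := hp.two_le
  refine ⟨?_, orderOf_one_add_xg p⟩
  haveI : Finite (truncPolyRing p) := Nat.finite_of_card_ne_zero (by
    rw [card_truncPolyRing p]
    exact pow_ne_zero _ hp.ne_zero)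
  set G := MonoidHom.ker (Units.map (truncPolyEval p).toMonoidHom) with hG
  have memG : ∀ u : (truncPolyRing p)ˣ, truncPolyEval p (u : truncPolyRing p) = 1 → u ∈ G := by
    intro u h
    rw [hG, MonoidHom.mem_ker]
    ext
    simpa using h
  have evalx : truncPolyEval p (xg p) = 0 := by
    rw [xg, truncPolyEval_mk']
    simp
  have hxpow : ∀ k : ℕ, 0 < k → truncPolyEval p (xg p ^ k) = 0 := by
    intro k hk
    rw [map_pow, evalx, zero_pow hk.ne']
  let mkG : ∀ (a : truncPolyRing p), truncPolyEval p a = 0 → G := fun a ha =>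
    ⟨(IsNilpotent.isUnit_one_add ⟨p + 1, nilpotent_of_eval_zero p a ha⟩).unit,
      memG _ (by rw [IsUnit.unit_spec, map_add, map_one, ha, add_zero])⟩
  have mkG_val : ∀ a ha, ((mkG a ha : (truncPolyRing p)ˣ) : truncPolyRing p) = 1 + a :=
    fun a ha => IsUnit.unit_spec _
  let ι : G →* truncPolyRing p := (Units.coeHom _).comp G.subtype
  have hι : Function.Injective ι := fun a b hab => Subtype.ext (Units.ext hab)
  have ι_mkG : ∀ a ha, ι (mkG a ha) = 1 + a := fun a ha => mkG_val a ha
  let g1 : G := mkG (xg p) evalx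
  let gi : Fin (p - 2) → G := fun i => mkG (xg p ^ (2 + (i : ℕ))) (hxpow _ (by omega))
  have hg1 : g1 ^ p ^ 2 = 1 := by
    apply hι
    rw [map_pow, map_one, show ι g1 = 1 + xg p from ι_mkG (xg p) evalx]
    exact one_add_xg_pow_p_sq p
  have hgi : ∀ i, gi i ^ p = 1 := by
    intro i
    apply hι
    rw [map_pow, map_one,
      show ι (gi i) = 1 + xg p ^ (2 + (i : ℕ)) from ι_mkG _ (hxpow _ (by omega))]
    exact one_add_xg_pow_k_pow_p p (by omega)
  let Φfun : Multiplicative (ZMod (p ^ 2) × (Fin (p - 2) → ZMod p)) → G := fun z =>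
    g1 ^ (Multiplicative.toAdd z).1.val *
      ∏ i : Fin (p - 2), gi i ^ ((Multiplicative.toAdd z).2 i).val
  have Φmul : ∀ z w, Φfun (z * w) = Φfun z * Φfun w := by
    intro z w
    show g1 ^ ((Multiplicative.toAdd z).1 + (Multiplicative.toAdd w).1).val *
        ∏ i : Fin (p - 2),
          gi i ^ (((Multiplicative.toAdd z).2 i + (Multiplicative.toAdd w).2 i)).val =
      (g1 ^ (Multiplicative.toAdd z).1.val *
          ∏ i : Fin (p - 2), gi i ^ ((Multiplicative.toAdd z).2 i).val) *
        (g1 ^ (Multiplicative.toAdd w).1.val *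
          ∏ i : Fin (p - 2), gi i ^ ((Multiplicative.toAdd w).2 i).val)
    rw [pow_val_add hg1]
    have hterm : ∀ i ∈ Finset.univ,
        gi i ^ (((Multiplicative.toAdd z).2 i + (Multiplicative.toAdd w).2 i)).val =
          gi i ^ ((Multiplicative.toAdd z).2 i).val *
            gi i ^ ((Multiplicative.toAdd w).2 i).val :=
      fun i _ => pow_val_add (hgi i) _ _
    rw [Finset.prod_congr rfl hterm, Finset.prod_mul_distrib]
    exact mul_mul_mul_comm (g1 ^ (Multiplicative.toAdd z).1.val)
      (g1 ^ (Multiplicative.toAdd w).1.val) _ _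
  let Φ : Multiplicative (ZMod (p ^ 2) × (Fin (p - 2) → ZMod p)) →* G := MonoidHom.mk' Φfun Φmul
  have hinj : Function.Injective Φ := by
    rw [injective_iff_map_eq_one]
    intro z hz
    set c := (Multiplicative.toAdd z).1 with hc
    set b := (Multiplicative.toAdd z).2 with hb
    have h0 : ι (Φ z) = 1 := by rw [hz, map_one]
    have hg1v : ι g1 = 1 + xg p := ι_mkG (xg p) evalx
    have hgiv : ∀ i : Fin (p - 2), ι (gi i) = 1 + xg p ^ (2 + (i : ℕ)) :=
      fun i => ι_mkG _ (hxpow _ (by omega))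
    have h1 : ι (Φ z) = (1 + xg p) ^ c.val *
        ∏ i : Fin (p - 2), (1 + xg p ^ (2 + (i : ℕ))) ^ (b i).val := by
      show ι (g1 ^ c.val * ∏ i : Fin (p - 2), gi i ^ (b i).val) = _
      rw [map_mul, map_pow, map_prod, hg1v]
      refine congrArg₂ (· * ·) rfl (Finset.prod_congr rfl fun i _ => ?_)
      rw [map_pow, hgiv]
    have hS : (1 + xg p) ^ c.val *
        ∏ i : Fin (p - 2), (1 + xg p ^ (2 + (i : ℕ))) ^ (b i).val = 1 := by
      rw [← h1]
      exact h0
    obtain ⟨M, hM⟩ := step1_dvd p _ _ hS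
    have hMlt : M < p := by
      have hv := c.val_lt
      rw [hM, pow_two] at hv
      by_contra hcon
      push_neg at hcon
      nlinarith
    have hfirst : (1 + xg p) ^ c.val = (1 + xg p ^ p) ^ M := by
      rw [hM, pow_mul, one_add_xg_pow_p]
    set E : ℕ → ℕ := fun k =>
      if h : k - 2 < p - 2 then (b ⟨k - 2, h⟩).val else M with hE
    have hElt : ∀ j, E j < p := by
      intro j
      simp only [hE]
      split
      · exact ZMod.val_lt _
      · exact hMlt
    have hprod : ∏ j ∈ Finset.range (p - 1), (1 + xg p ^ (2 + j)) ^ E (2 + j) = 1 := by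
      rw [show Finset.range (p - 1) = Finset.range ((p - 2) + 1) from by
        rw [show p - 1 = (p - 2) + 1 from by omega]]
      rw [Finset.prod_range_succ]
      have hlast : E (2 + (p - 2)) = M := by
        simp only [hE]
        rw [dif_neg (by omega)]
      rw [hlast, show 2 + (p - 2) = p from by omega]
      have hfront : ∏ j ∈ Finset.range (p - 2), (1 + xg p ^ (2 + j)) ^ E (2 + j) =
          ∏ i : Fin (p - 2), (1 + xg p ^ (2 + (i : ℕ))) ^ (b i).val := by
        rw [← Fin.prod_univ_eq_prod_range (fun j => (1 + xg p ^ (2 + j)) ^ E (2 + j)) (p - 2)]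
        refine Finset.prod_congr rfl fun i _ => ?_
        have hEi : E (2 + (i : ℕ)) = (b i).val := by
          simp only [hE]
          rw [dif_pos (by have := i.isLt; omega)]
          exact congrArg (fun t => (b t).val)
            (Fin.ext (show 2 + (i : ℕ) - 2 = (i : ℕ) by omega))
        rw [hEi]
      rw [hfront, ← hfirst, mul_comm, hS]
    have hall := prod_one_add_pow_eq_one p E hElt hprod
    have hMzero : M = 0 := by
      have h := hall (p - 2) (by omega)
      rw [show 2 + (p - 2) = p from by omega] at h
      simp only [hE] at h
      rwa [dif_neg (by omega)] at h
    have hczero : c = 0 := by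
      rw [← ZMod.val_eq_zero, hM, hMzero, mul_zero]
    have hbzero : ∀ i, b i = 0 := by
      intro i
      have h := hall (i : ℕ) (by have := i.isLt; omega)
      simp only [hE] at h
      rw [dif_pos (by have := i.isLt; omega)] at h
      rw [← ZMod.val_eq_zero]
      have heq : (⟨2 + (i : ℕ) - 2, by have := i.isLt; omega⟩ : Fin (p - 2)) = i :=
        Fin.ext (show 2 + (i : ℕ) - 2 = (i : ℕ) by omega)
      rw [← heq]
      exact h
    have hzero : Multiplicative.toAdd z = 0 := Prod.ext hczero (funext hbzero)
    rw [← toAdd_eq_zero]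
    exact hzero
  have hGcard : Nat.card G = p ^ p := by
    have tofun : ∀ u : G,
        truncPolyEval p (((u : (truncPolyRing p)ˣ) : truncPolyRing p) - 1) = 0 := by
      intro u
      have hu : Units.map (truncPolyEval p).toMonoidHom (u : (truncPolyRing p)ˣ) = 1 := u.2
      have hval : truncPolyEval p ((u : (truncPolyRing p)ˣ) : truncPolyRing p) = 1 := by
        have := congrArg (Units.val) hu
        simpa using this
      rw [map_sub, map_one, hval, sub_self]
    have eqv : G ≃ {a : truncPolyRing p // truncPolyEval p a = 0} := by
      refine ⟨fun u => ⟨((u : (truncPolyRing p)ˣ) : truncPolyRing p) - 1, tofun u⟩,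
        fun a => mkG a.1 a.2, ?_, ?_⟩
      · intro u
        apply Subtype.ext
        apply Units.ext
        rw [mkG_val _ (tofun u)]
        ring
      · intro a
        apply Subtype.ext
        dsimp only
        rw [mkG_val _ a.2, add_sub_cancel_left]
    rw [Nat.card_congr eqv, card_eval_zero_set]
  have hsrc : Nat.card (Multiplicative (ZMod (p ^ 2) × (Fin (p - 2) → ZMod p))) = p ^ p := by
    rw [Nat.card_congr (Multiplicative.toAdd (α := ZMod (p ^ 2) × (Fin (p - 2) → ZMod p))),
      Nat.card_prod, Nat.card_zmod, Nat.card_fun, Nat.card_zmod,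
      Nat.card_eq_fintype_card (α := Fin (p - 2)), Fintype.card_fin, ← pow_add,
      show 2 + (p - 2) = p from by omega]
  haveI : Finite G := Subtype.finite
  have hbij : Function.Bijective Φ := by
    rw [Nat.bijective_iff_injective_and_card]
    exact ⟨hinj, by rw [hsrc, hGcard]⟩
  exact ⟨(MulEquiv.ofBijective Φ hbij).symm⟩
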